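/- Fix T > 0. Let (λ_k)_{k≥1} and (μ_k)_{k≥1} be sequences of real numbers with λ_k → +∞ as k → ∞, and suppose there exists a real constant C₀ such that μ_k ≤ C₀ for all k. For each k let f_k : ℝ → ℝ be the fundamental solution with parameters μ_k, λ_k. Then sup_{k≥1} sup_{t∈[0,T]} f_k'(t)² < ∞, where f_k' denotes the time derivative of f_k. -/

import Mathlib

/-- Uniform boundedness of the squared derivatives of the fundamental
solutions `f_k` of `f'' - μ_k f' + λ_k f = 0`, `f 0 = 0`, `f' 0 = 1`, on `[0, T]`,
under `λ_k → +∞` and `μ_k ≤ C₀` for all `k`. -/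
theorem stmt_3 (T : ℝ) (hT : 0 < T) (lam mu : ℕ → ℝ)
    (hlam : Filter.Tendsto lam Filter.atTop Filter.atTop)
    (C₀ : ℝ) (hbdd : ∀ k, mu k ≤ C₀)
    (f : ℕ → ℝ → ℝ)
    (hreg : ∀ k, ContDiff ℝ 2 (f k))
    (hode : ∀ k, ∀ t : ℝ,
      deriv (deriv (f k)) t - mu k * deriv (f k) t + lam k * f k t = 0)
    (hf0 : ∀ k, f k 0 = 0) (hf'0 : ∀ k, deriv (f k) 0 = 1) :
    ∃ M : ℝ, ∀ k, 1 ≤ k → ∀ t ∈ Set.Icc (0 : ℝ) T, (deriv (f k) t) ^ 2 ≤ M := by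
  set C : ℝ := max C₀ 0 with hC
  have hC0 : 0 ≤ C := le_max_right _ _
  have hmuC : ∀ k, mu k ≤ C := fun k => le_trans (hbdd k) (le_max_left _ _)
  -- differentiability facts
  have hd1 : ∀ k, Differentiable ℝ (f k) := fun k =>
    (hreg k).differentiable (by norm_num)
  have hd2 : ∀ k, Differentiable ℝ (deriv (f k)) := by
    intro k
    have h2 : ContDiff ℝ (1+1) (f k) := by norm_num [hreg k]
    exact (contDiff_succ_iff_deriv.mp h2).2.2.differentiable (by norm_num)
  -- main energy estimate for k with lam k ≥ 0
  have key : ∀ k, 0 ≤ lam k → ∀ t ∈ Set.Icc (0:ℝ) T,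
      (deriv (f k) t) ^ 2 ≤ Real.exp (2*C*T) := by
    intro k hlk t ht
    set F := f k with hF
    set g : ℝ → ℝ := fun t =>
      ((deriv F t)^2 + lam k * (F t)^2) * Real.exp (-(2*C)*t) with hg
    have hgd : ∀ s : ℝ, HasDerivAt g
        (((2 * deriv F s * deriv (deriv F) s) + lam k * (2 * F s * deriv F s))
            * Real.exp (-(2*C)*s)
          + ((deriv F s)^2 + lam k * (F s)^2) * (-(2*C) * Real.exp (-(2*C)*s))) s := by
      intro s
      have h1 : HasDerivAt (fun t => (deriv F t)^2)
          (2 * deriv F s * deriv (deriv F) s) s := by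
        have := ((hd2 k s).hasDerivAt).fun_pow 2
        simpa [mul_comm, mul_assoc, mul_left_comm] using this
      have h2 : HasDerivAt (fun t => lam k * (F t)^2)
          (lam k * (2 * F s * deriv F s)) s := by
        have := (((hd1 k s).hasDerivAt).fun_pow 2).const_mul (lam k)
        simpa [mul_comm, mul_assoc, mul_left_comm] using this
      have h3 : HasDerivAt (fun t => Real.exp (-(2*C)*t))
          (-(2*C) * Real.exp (-(2*C)*s)) s := by
        have := ((hasDerivAt_id s).const_mul (-(2*C))).exp
        simpa [mul_comm] using this
      simpa [hg, neg_mul, mul_neg, mul_assoc] using (h1.fun_add h2).fun_mul h3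
    have hganti : Antitone g := by
      apply antitone_of_deriv_nonpos
      · intro s
        exact (hgd s).differentiableAt
      · intro s
        rw [(hgd s).deriv]
        have hode' := hode k s
        have hFF : deriv (deriv F) s = mu k * deriv F s - lam k * F s := by
          rw [hF]; linarith
        rw [hFF]
        have hexp : 0 < Real.exp (-(2*C)*s) := Real.exp_pos _
        have hmu : mu k ≤ C := hmuC k
        nlinarith [sq_nonneg (deriv F s), sq_nonneg (F s),
          mul_nonneg hlk (sq_nonneg (F s)),
          mul_nonneg (mul_nonneg hlk (sq_nonneg (F s))) hexp.le,
          mul_nonneg hC0 (mul_nonneg (sq_nonneg (deriv F s)) hexp.le),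
          mul_le_mul_of_nonneg_right
            (mul_le_mul_of_nonneg_right hmu (sq_nonneg (deriv F s))) hexp.le]
    have hg0 : g 0 = 1 := by
      simp [hg, hF, hf0 k, hf'0 k]
    have hgt : g t ≤ 1 := by
      rw [← hg0]; exact hganti ht.1
    have hEt : (deriv F t)^2 + lam k * (F t)^2 ≤ Real.exp (2*C*t) := by
      have := mul_le_mul_of_nonneg_right hgt (Real.exp_pos ((2*C)*t)).le
      rw [hg] at this
      simp only [one_mul] at this
      calc (deriv F t)^2 + lam k * (F t)^2
          = ((deriv F t)^2 + lam k * (F t)^2) * (Real.exp (-(2*C)*t) * Real.exp ((2*C)*t)) := by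
            rw [← Real.exp_add]; simp
        _ ≤ Real.exp (2*C*t) := by
            rw [← mul_assoc]; exact this
    have h1 : (deriv F t)^2 ≤ Real.exp (2*C*t) := by
      nlinarith [mul_nonneg hlk (sq_nonneg (F t))]
    calc (deriv F t)^2 ≤ Real.exp (2*C*t) := h1
      _ ≤ Real.exp (2*C*T) := by
          apply Real.exp_le_exp.mpr
          have := ht.2
          nlinarith
  -- finitely many exceptional k
  obtain ⟨N, hN⟩ := (hlam.eventually_ge_atTop 0).exists_forall_of_atTop
  -- for each k < N, bound by compactness
  have hbd : ∀ k, ∃ B, ∀ t ∈ Set.Icc (0:ℝ) T, (deriv (f k) t)^2 ≤ B := by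
    intro k
    have hc : ContinuousOn (fun t => (deriv (f k) t)^2) (Set.Icc (0:ℝ) T) :=
      (((hd2 k).continuous).pow 2).continuousOn
    obtain ⟨B, hB⟩ := (isCompact_Icc.image_of_continuousOn hc).bddAbove
    exact ⟨B, fun t ht => hB ⟨t, ht, rfl⟩⟩
  choose B hB using hbd
  have hfin : BddAbove (B '' Set.Iio N) := ((Set.finite_Iio N).image B).bddAbove
  obtain ⟨M₁, hM₁⟩ := hfin
  refine ⟨max (Real.exp (2*C*T)) M₁, fun k _ t ht => ?_⟩
  by_cases hk : N ≤ k
  · exact le_trans (key k (hN k hk) t ht) (le_max_left _ _)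
  · push_neg at hk
    exact le_trans (le_trans (hB k t ht) (hM₁ ⟨k, hk, rfl⟩)) (le_max_right _ _)
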